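/- Let l : ℝ × ℝ → ℝ be convex, Lipschitz, with l(y,z) = l(−y,−z), and set L := sup |∇_z l|. Let P_n be the empirical measure of points (X_1,Y_1),…,(X_n,Y_n) in ℝ^d × ℝ, and let D be the optimal transport cost with ground cost c((x,y),(x',y')) = ‖x − x'‖₁ if y = y' and +∞ otherwise. Then for any δ ≥ 0, inf over convex Lipschitz f of sup_{P : D(P, P_n) ≤ δ} E_P[l(Y, f(X))] equals inf over convex Lipschitz f of { δ L ‖∇f‖_∞ + (1/n) Σ_{i=1}^n l(Y_i, f(X_i)) }. -/

import Mathlib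

open MeasureTheory Finset Set
open scoped NNReal ENNReal

/-- The ground transport cost `c((x,y),(x',y')) = ‖x − x'‖₁` if `y = y'`, `+∞` otherwise. -/
noncomputable def groundCost (d : ℕ) (p q : (Fin d → ℝ) × ℝ) : ℝ≥0∞ :=
  if p.2 = q.2 then ENNReal.ofReal (∑ i, |p.1 i - q.1 i|) else ⊤

/-- The optimal transport cost `D(μ, ν)` associated with `groundCost`. -/
noncomputable def transportCost (d : ℕ) (μ ν : Measure ((Fin d → ℝ) × ℝ)) : ℝ≥0∞ :=
  ⨅ (π : Measure (((Fin d → ℝ) × ℝ) × ((Fin d → ℝ) × ℝ)))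
    (_ : π.map Prod.fst = μ) (_ : π.map Prod.snd = ν),
      ∫⁻ p, groundCost d p.1 p.2 ∂π

/-- `‖∇f‖_∞`: the supremum over `x` of the `ℓ_∞` norms of subgradients of `f` at `x`. -/
noncomputable def gradSupNorm (d : ℕ) (f : (Fin d → ℝ) → ℝ) : ℝ :=
  sSup {c : ℝ | ∃ (x g : Fin d → ℝ),
    (∀ y : Fin d → ℝ, f x + ∑ i, g i * (y i - x i) ≤ f y) ∧ c = ‖g‖}

/-- `L := sup |∇_z l|`: the supremum of absolute values of partial subgradients of `l`
in its second argument. -/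
noncomputable def lossGradBound (l : ℝ → ℝ → ℝ) : ℝ :=
  sSup {c : ℝ | ∃ y z g : ℝ, (∀ z' : ℝ, l y z + g * (z' - z) ≤ l y z') ∧ c = |g|}


lemma exists_cont_subgradient {V : Type*} [NormedAddCommGroup V] [NormedSpace ℝ V]
    {f : V → ℝ} (hf : ConvexOn ℝ Set.univ f) (hc : Continuous f) (x : V) :
    ∃ φ : V →L[ℝ] ℝ, ∀ y, f x + φ (y - x) ≤ f y := by
  set O : Set (V × ℝ) := {p : V × ℝ | f p.1 < p.2} with hO
  have hOopen : IsOpen O := isOpen_lt (hc.comp continuous_fst) continuous_snd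
  have hOconv : Convex ℝ O := by
    intro p hp q hq a b ha hb hab
    have := hf.2 (Set.mem_univ p.1) (Set.mem_univ q.1) ha hb hab
    simp only [hO, Set.mem_setOf_eq] at hp hq ⊢
    calc f (a • p + b • q).1 = f (a • p.1 + b • q.1) := rfl
      _ ≤ a * f p.1 + b * f q.1 := by simpa using this
      _ < a * p.2 + b * q.2 := by
          rcases ha.lt_or_eq with ha' | ha'
          · rcases hb.lt_or_eq with hb' | hb'
            · exact add_lt_add (by nlinarith) (by nlinarith)
            · subst hb'; simp only [zero_mul, add_zero]
              exact mul_lt_mul_of_pos_left hp ha'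
          · subst ha'; simp only [zero_mul, zero_add]
            have hb' : 0 < b := by linarith
            exact mul_lt_mul_of_pos_left hq hb'
      _ = (a • p + b • q).2 := rfl
  have hxO : (x, f x) ∉ O := by simp [hO]
  obtain ⟨Φ, hΦ⟩ := geometric_hahn_banach_point_open hOconv hOopen hxO
  set c : ℝ := Φ (0, 1) with hc'
  have hdec : ∀ (y : V) (t : ℝ), Φ (y, t) = Φ (y, 0) + t * c := by
    intro y t
    have h1 : (y, t) = (y, (0:ℝ)) + t • ((0:V), (1:ℝ)) := by simp [Prod.ext_iff]
    rw [h1, map_add, Φ.map_smul, smul_eq_mul]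
  have key : ∀ (y : V) (u : ℝ), 0 < u → Φ (x, 0) + f x * c < Φ (y, 0) + (f y + u) * c := by
    intro y u hu
    have := hΦ (y, f y + u) (by simp [hO]; linarith)
    rw [hdec x (f x), hdec y (f y + u)] at this; exact this
  have hcpos : 0 < c := by
    by_contra h
    push_neg at h
    have h1 := key x 1 one_pos
    have h2 := key x 2 two_pos
    nlinarith
  have key2 : ∀ y : V, Φ (x, 0) + f x * c ≤ Φ (y, 0) + f y * c := by
    intro y
    by_contra h
    push_neg at h
    set u : ℝ := (Φ (x,0) + f x * c - (Φ (y,0) + f y * c)) / (2 * c) with hu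
    have hupos : 0 < u := div_pos (by linarith) (by linarith)
    have hk := key y u hupos
    have huc : u * c = (Φ (x,0) + f x * c - (Φ (y,0) + f y * c)) / 2 := by
      rw [hu]; field_simp
    nlinarith
  refine ⟨(-c⁻¹) • Φ.comp (ContinuousLinearMap.inl ℝ V ℝ), fun y => ?_⟩
  have h := key2 y
  have heq : ((-c⁻¹) • Φ.comp (ContinuousLinearMap.inl ℝ V ℝ)) (y - x)
      = -c⁻¹ * (Φ (y, 0) - Φ (x, 0)) := by
    simp only [ContinuousLinearMap.smul_apply, ContinuousLinearMap.comp_apply,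
      ContinuousLinearMap.inl_apply, smul_eq_mul]
    rw [show ((y - x : V), (0:ℝ)) = (y, (0:ℝ)) - (x, 0) by simp [Prod.ext_iff]]
    rw [map_sub]
  rw [heq]
  have hcne : c ≠ 0 := ne_of_gt hcpos
  have hinv : c⁻¹ * c = 1 := inv_mul_cancel₀ hcne
  have hinvpos : 0 < c⁻¹ := inv_pos.2 hcpos
  have e1 : c⁻¹ * (f x * c) = f x := by field_simp
  have e2 : c⁻¹ * (f y * c) = f y := by field_simp
  nlinarith [mul_le_mul_of_nonneg_left h hinvpos.le]

section pi
variable {d : ℕ} {f : (Fin d → ℝ) → ℝ} {C : ℝ≥0}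

lemma exists_pi_subgradient (hf : ConvexOn ℝ Set.univ f) (hlip : LipschitzWith C f)
    (x : Fin d → ℝ) :
    ∃ g : Fin d → ℝ, (∀ y, f x + ∑ i, g i * (y i - x i) ≤ f y) := by
  obtain ⟨φ, hφ⟩ := exists_cont_subgradient hf hlip.continuous x
  refine ⟨fun i => φ (Pi.single i (1:ℝ)), fun y => ?_⟩
  have hrep : (y - x : Fin d → ℝ) = ∑ i, (fun j => (y i - x i) * (Pi.single i (1:ℝ) : Fin d → ℝ) j) := by
    funext j
    simp [Finset.sum_apply, Pi.single_apply]
  have hre2 : ∀ i, (fun j => (y i - x i) * (Pi.single i (1:ℝ) : Fin d → ℝ) j) = (y i - x i) • (Pi.single i (1:ℝ) : Fin d → ℝ) := by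
    intro i; funext j; simp [Pi.smul_apply]
  have hkey : φ (y - x) = ∑ i, (y i - x i) * φ (Pi.single i (1:ℝ)) := by
    rw [hrep, map_sum]
    refine Finset.sum_congr rfl fun i _ => ?_
    rw [hre2 i, φ.map_smul, smul_eq_mul]
  calc f x + ∑ i, φ (Pi.single i (1:ℝ)) * (y i - x i)
      = f x + φ (y - x) := by
        rw [hkey]; congr 1; exact Finset.sum_congr rfl fun i _ => mul_comm _ _
    _ ≤ f y := hφ y

lemma pi_subgradient_norm_le (hlip : LipschitzWith C f) {x g : Fin d → ℝ}
    (hg : ∀ y, f x + ∑ i, g i * (y i - x i) ≤ f y) : ‖g‖ ≤ C := by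
  rw [pi_norm_le_iff_of_nonneg C.coe_nonneg]
  intro i
  have key : ∀ t : ℝ, g i * t ≤ C * |t| := by
    intro t
    have h := hg (x + (Pi.single i t : Fin d → ℝ))
    have hsum : ∑ j, g j * ((x + (Pi.single i t : Fin d → ℝ)) j - x j) = g i * t := by
      have : ∀ j, (x + (Pi.single i t : Fin d → ℝ)) j - x j = (Pi.single i t : Fin d → ℝ) j := by
        intro j; simp
      simp_rw [this]
      rw [Finset.sum_eq_single i]
      · simp
      · intro j _ hj; simp [Pi.single_apply, hj]
      · simp
    rw [hsum] at h
    have hd : dist (f (x + (Pi.single i t : Fin d → ℝ))) (f x) ≤ C * |t| := by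
      refine (hlip.dist_le_mul _ x).trans_eq ?_
      rw [dist_eq_norm]
      simp only [add_sub_cancel_left]
      rw [Pi.norm_single, Real.norm_eq_abs]
    have h2 : f (x + (Pi.single i t : Fin d → ℝ)) - f x ≤ C * |t| :=
      (le_abs_self _).trans (by rw [← Real.dist_eq] at *; exact hd)
    linarith
  have h1 := key 1
  have h2 := key (-1)
  simp only [mul_one, abs_one, mul_neg_one, abs_neg] at h1 h2
  rw [Real.norm_eq_abs, abs_le]
  exact ⟨by linarith, by linarith⟩
end pi

section grad
variable {d : ℕ} {f : (Fin d → ℝ) → ℝ} {C : ℝ≥0}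

lemma gradSet_bddAbove (hlip : LipschitzWith C f) :
    BddAbove {c : ℝ | ∃ (x g : Fin d → ℝ),
      (∀ y : Fin d → ℝ, f x + ∑ i, g i * (y i - x i) ≤ f y) ∧ c = ‖g‖} := by
  refine ⟨C, fun c hc => ?_⟩
  obtain ⟨x, g, hg, rfl⟩ := hc
  exact pi_subgradient_norm_le hlip hg

lemma gradSet_nonempty (hf : ConvexOn ℝ Set.univ f) (hlip : LipschitzWith C f) :
    Set.Nonempty {c : ℝ | ∃ (x g : Fin d → ℝ),
      (∀ y : Fin d → ℝ, f x + ∑ i, g i * (y i - x i) ≤ f y) ∧ c = ‖g‖} := by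
  obtain ⟨g, hg⟩ := exists_pi_subgradient hf hlip 0
  exact ⟨‖g‖, 0, g, hg, rfl⟩

lemma subgrad_le_gradSupNorm (hlip : LipschitzWith C f) {x g : Fin d → ℝ}
    (hg : ∀ y, f x + ∑ i, g i * (y i - x i) ≤ f y) : ‖g‖ ≤ gradSupNorm d f :=
  le_csSup (gradSet_bddAbove hlip) ⟨x, g, hg, rfl⟩

lemma gradSupNorm_nonneg (hf : ConvexOn ℝ Set.univ f) (hlip : LipschitzWith C f) :
    0 ≤ gradSupNorm d f := by
  obtain ⟨g, hg⟩ := exists_pi_subgradient hf hlip 0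
  exact (norm_nonneg g).trans (subgrad_le_gradSupNorm hlip hg)

lemma sub_le_gradSupNorm_mul (hf : ConvexOn ℝ Set.univ f) (hlip : LipschitzWith C f)
    (x y : Fin d → ℝ) : f x - f y ≤ gradSupNorm d f * ∑ i, |x i - y i| := by
  obtain ⟨g, hg⟩ := exists_pi_subgradient hf hlip x
  have h := hg y
  have h2 : f x - f y ≤ ∑ i, -(g i * (y i - x i)) := by
    have : ∑ i, -(g i * (y i - x i)) = -∑ i, g i * (y i - x i) := by
      rw [Finset.sum_neg_distrib]
    rw [this]; linarith
  refine h2.trans ?_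
  rw [Finset.mul_sum]
  refine Finset.sum_le_sum fun i _ => ?_
  have h3 : -(g i * (y i - x i)) ≤ |g i| * |x i - y i| := by
    calc -(g i * (y i - x i)) = g i * -(y i - x i) := by ring
      _ ≤ |g i * -(y i - x i)| := le_abs_self _
      _ = |g i| * |(-(y i - x i))| := abs_mul _ _
      _ = |g i| * |x i - y i| := by rw [show -(y i - x i) = x i - y i by ring]
  refine h3.trans (mul_le_mul_of_nonneg_right ?_ (abs_nonneg _))
  calc |g i| = ‖g i‖ := rfl
    _ ≤ ‖g‖ := norm_le_pi_norm g i
    _ ≤ gradSupNorm d f := subgrad_le_gradSupNorm hlip hg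
end grad

section loss
variable {l : ℝ → ℝ → ℝ} {C : ℝ≥0}

lemma exists_partial_subgradient (hlconv : ConvexOn ℝ Set.univ (fun p : ℝ × ℝ => l p.1 p.2))
    (hllip : LipschitzWith C (fun p : ℝ × ℝ => l p.1 p.2)) (y z : ℝ) :
    ∃ g : ℝ, ∀ z', l y z + g * (z' - z) ≤ l y z' := by
  obtain ⟨φ, hφ⟩ := exists_cont_subgradient hlconv hllip.continuous (y, z)
  refine ⟨φ (0, 1), fun z' => ?_⟩
  have h := hφ (y, z')
  have : ((y, z') - (y, z) : ℝ × ℝ) = (z' - z) • ((0:ℝ), (1:ℝ)) := by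
    simp [Prod.ext_iff]
  rw [this, φ.map_smul, smul_eq_mul] at h
  calc l y z + φ (0,1) * (z' - z) = l y z + (z' - z) * φ (0,1) := by ring
    _ ≤ l y z' := h

lemma loss_lip_snd (hllip : LipschitzWith C (fun p : ℝ × ℝ => l p.1 p.2)) (y a b : ℝ) :
    |l y a - l y b| ≤ C * |a - b| := by
  have := hllip.dist_le_mul (y, a) (y, b)
  rw [Prod.dist_eq] at this
  simp only [dist_self] at this
  calc |l y a - l y b| = dist (l y a) (l y b) := by rw [Real.dist_eq]
    _ ≤ C * max 0 (dist a b) := this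
    _ = C * |a - b| := by rw [Real.dist_eq, max_eq_right (abs_nonneg _)]

lemma loss_lip_fst (hllip : LipschitzWith C (fun p : ℝ × ℝ => l p.1 p.2)) (a b z : ℝ) :
    |l a z - l b z| ≤ C * |a - b| := by
  have := hllip.dist_le_mul (a, z) (b, z)
  rw [Prod.dist_eq] at this
  calc |l a z - l b z| = dist (l a z) (l b z) := by rw [Real.dist_eq]
    _ ≤ C * max (dist a b) (dist z z) := this
    _ = C * |a - b| := by rw [dist_self, Real.dist_eq, max_eq_left (abs_nonneg _)]

lemma partial_subgradient_abs_le (hllip : LipschitzWith C (fun p : ℝ × ℝ => l p.1 p.2))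
    {y z g : ℝ} (hg : ∀ z', l y z + g * (z' - z) ≤ l y z') : |g| ≤ C := by
  have key : ∀ t : ℝ, g * t ≤ C * |t| := by
    intro t
    have h := hg (z + t)
    have h2 : l y (z + t) - l y z ≤ C * |t| := by
      have := (le_abs_self (l y (z+t) - l y z)).trans (loss_lip_snd hllip y (z+t) z)
      simpa using this
    simp only [add_sub_cancel_left] at h
    linarith
  have h1 := key 1
  have h2 := key (-1)
  simp only [mul_one, abs_one, mul_neg_one, abs_neg] at h1 h2
  rw [abs_le]; exact ⟨by linarith, by linarith⟩

lemma lossSet_bddAbove (hllip : LipschitzWith C (fun p : ℝ × ℝ => l p.1 p.2)) :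
    BddAbove {c : ℝ | ∃ y z g : ℝ, (∀ z' : ℝ, l y z + g * (z' - z) ≤ l y z') ∧ c = |g|} := by
  refine ⟨C, fun c hc => ?_⟩
  obtain ⟨y, z, g, hg, rfl⟩ := hc
  exact partial_subgradient_abs_le hllip hg

lemma lossSet_nonempty (hlconv : ConvexOn ℝ Set.univ (fun p : ℝ × ℝ => l p.1 p.2))
    (hllip : LipschitzWith C (fun p : ℝ × ℝ => l p.1 p.2)) :
    Set.Nonempty {c : ℝ | ∃ y z g : ℝ, (∀ z' : ℝ, l y z + g * (z' - z) ≤ l y z') ∧ c = |g|} := by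
  obtain ⟨g, hg⟩ := exists_partial_subgradient hlconv hllip 0 0
  exact ⟨|g|, 0, 0, g, hg, rfl⟩

lemma partial_subgrad_le_lossGradBound (hllip : LipschitzWith C (fun p : ℝ × ℝ => l p.1 p.2))
    {y z g : ℝ} (hg : ∀ z', l y z + g * (z' - z) ≤ l y z') : |g| ≤ lossGradBound l :=
  le_csSup (lossSet_bddAbove hllip) ⟨y, z, g, hg, rfl⟩

lemma lossGradBound_nonneg (hlconv : ConvexOn ℝ Set.univ (fun p : ℝ × ℝ => l p.1 p.2))
    (hllip : LipschitzWith C (fun p : ℝ × ℝ => l p.1 p.2)) : 0 ≤ lossGradBound l := by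
  obtain ⟨g, hg⟩ := exists_partial_subgradient hlconv hllip 0 0
  exact (abs_nonneg g).trans (partial_subgrad_le_lossGradBound hllip hg)

lemma loss_lip_snd' (hlconv : ConvexOn ℝ Set.univ (fun p : ℝ × ℝ => l p.1 p.2))
    (hllip : LipschitzWith C (fun p : ℝ × ℝ => l p.1 p.2)) (y a b : ℝ) :
    |l y a - l y b| ≤ lossGradBound l * |a - b| := by
  have key : ∀ a b : ℝ, l y a - l y b ≤ lossGradBound l * |a - b| := by
    intro a b
    obtain ⟨g, hg⟩ := exists_partial_subgradient hlconv hllip y a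
    have h := hg b
    have : l y a - l y b ≤ -(g * (b - a)) := by linarith
    refine this.trans ?_
    calc -(g * (b - a)) ≤ |(-(g * (b - a)))| := le_abs_self _
      _ = |g| * |b - a| := by rw [abs_neg, abs_mul]
      _ = |g| * |a - b| := by rw [abs_sub_comm]
      _ ≤ lossGradBound l * |a - b| :=
          mul_le_mul_of_nonneg_right (partial_subgrad_le_lossGradBound hllip hg) (abs_nonneg _)
  rcases abs_sub_le_iff.2 ⟨key a b, (abs_sub_comm a b ▸ key b a : l y b - l y a ≤ lossGradBound l * |a - b|)⟩ with h
  exact h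

/-- Recession-slope lemma: partial slopes close to `L` exist, uniformly usable at any `y`. -/
lemma exists_recession_slope (hlconv : ConvexOn ℝ Set.univ (fun p : ℝ × ℝ => l p.1 p.2))
    (hllip : LipschitzWith C (fun p : ℝ × ℝ => l p.1 p.2))
    (hlsym : ∀ y z : ℝ, l y z = l (-y) (-z)) (y : ℝ) {ε : ℝ} (hε : 0 < ε) :
    ∃ z K g : ℝ, lossGradBound l - ε < g ∧ 0 ≤ K ∧
      ∀ t : ℝ, l y z + g * t - K ≤ l y (z + t) := by
  have hne := lossSet_nonempty hlconv hllip
  have hlt : lossGradBound l - ε < lossGradBound l := by linarith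
  obtain ⟨c, hc, hcgt⟩ := exists_lt_of_lt_csSup hne hlt
  obtain ⟨y₁, z₁, g₁, hg₁, rfl⟩ := hc
  -- get a nonnegative-slope version
  obtain ⟨y₂, z₂, g₂, hg₂, hg₂val⟩ :
      ∃ y₂ z₂ g₂ : ℝ, (∀ z', l y₂ z₂ + g₂ * (z' - z₂) ≤ l y₂ z') ∧ g₂ = |g₁| := by
    rcases le_or_gt 0 g₁ with h | h
    · exact ⟨y₁, z₁, g₁, hg₁, (abs_of_nonneg h).symm⟩
    · refine ⟨-y₁, -z₁, -g₁, fun z' => ?_, (abs_of_neg h).symm⟩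
      have := hg₁ (-z')
      rw [← hlsym y₁ z₁, show l (-y₁) z' = l y₁ (-z') by rw [hlsym y₁ (-z')]; ring_nf]
      linarith
  refine ⟨z₂, 2 * C * |y - y₂|, g₂, by rw [hg₂val]; exact hcgt, by positivity, fun t => ?_⟩
  have h1 : |l y (z₂ + t) - l y₂ (z₂ + t)| ≤ C * |y - y₂| := loss_lip_fst hllip y y₂ (z₂ + t)
  have h2 : |l y z₂ - l y₂ z₂| ≤ C * |y - y₂| := loss_lip_fst hllip y y₂ z₂
  have h3 := hg₂ (z₂ + t)
  simp only [add_sub_cancel_left] at h3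
  have h1' := abs_le.1 h1
  have h2' := abs_le.1 h2
  linarith [h1'.1, h1'.2, h2'.1, h2'.2, h3]
end loss

section emp
variable {d n : ℕ}

lemma integrable_dirac_of_sm {α E : Type*} [MeasurableSpace α] [MeasurableSingletonClass α]
    [NormedAddCommGroup E] {h : α → E} (hm : StronglyMeasurable h) (a : α) :
    Integrable h (Measure.dirac a) := by
  refine ⟨hm.aestronglyMeasurable, ?_⟩
  rw [HasFiniteIntegral, lintegral_dirac]
  exact ENNReal.coe_lt_top

lemma integral_empirical (hn : 0 < n) (P : Fin n → (Fin d → ℝ) × ℝ) {h : ((Fin d → ℝ) × ℝ) → ℝ}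
    (hm : StronglyMeasurable h) :
    ∫ q, h q ∂((n : ℝ≥0∞)⁻¹ • ∑ i : Fin n, Measure.dirac (P i)) =
      (1 / n) * ∑ i, h (P i) := by
  rw [integral_smul_measure,
    integral_finset_sum_measure (fun i _ => integrable_dirac_of_sm hm (P i))]
  have : ∀ i, ∫ q, h q ∂Measure.dirac (P i) = h (P i) := fun i => integral_dirac' h (P i) hm
  simp_rw [this]
  rw [smul_eq_mul]
  congr 1
  rw [ENNReal.toReal_inv]
  simp

lemma isProb_empirical (hn : 0 < n) (P : Fin n → (Fin d → ℝ) × ℝ) :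
    IsProbabilityMeasure ((n : ℝ≥0∞)⁻¹ • ∑ i : Fin n, Measure.dirac (P i)) := by
  constructor
  rw [Measure.smul_apply, Measure.coe_finset_sum, Finset.sum_apply]
  simp only [Measure.dirac_apply_of_mem (Set.mem_univ _), Finset.sum_const, Finset.card_univ,
    Fintype.card_fin, nsmul_eq_mul, mul_one, smul_eq_mul]
  rw [ENNReal.inv_mul_cancel]
  · exact Nat.cast_ne_zero.2 hn.ne'
  · exact ENNReal.natCast_ne_top n

lemma measurable_groundCost :
    Measurable (fun p : ((Fin d → ℝ) × ℝ) × ((Fin d → ℝ) × ℝ) => groundCost d p.1 p.2) := by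
  unfold groundCost
  refine Measurable.ite ?_ ?_ measurable_const
  · exact (isClosed_eq (continuous_snd.comp continuous_fst) (continuous_snd.comp continuous_snd)).measurableSet
  · refine ENNReal.measurable_ofReal.comp ?_
    have hcont : Continuous (fun p : ((Fin d → ℝ) × ℝ) × ((Fin d → ℝ) × ℝ) =>
        ∑ i, |p.1.1 i - p.2.1 i|) := by
      refine continuous_finset_sum _ fun i _ => ?_
      exact (((continuous_apply i).comp (continuous_fst.comp continuous_fst)).sub
        ((continuous_apply i).comp (continuous_fst.comp continuous_snd))).abs
    exact hcont.measurable

lemma transportCost_self_le (μ : Measure ((Fin d → ℝ) × ℝ)) [SFinite μ] (c : ℝ≥0∞) :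
    transportCost d μ μ ≤ c := by
  refine le_trans ?_ zero_le
  unfold transportCost
  have hmd : Measurable (fun q : (Fin d → ℝ) × ℝ => (q, q)) := measurable_id.prodMk measurable_id
  refine iInf_le_of_le (μ.map (fun q => (q, q))) ?_
  rw [Measure.map_map measurable_fst hmd, Measure.map_map measurable_snd hmd]
  simp only [Function.comp_def]
  rw [iInf_pos (by simp [Measure.map_id]), iInf_pos (by simp [Measure.map_id])]
  rw [lintegral_map measurable_groundCost hmd]
  have : ∀ q : (Fin d → ℝ) × ℝ, groundCost d q q = 0 := by
    intro q; unfold groundCost; simp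
  simp_rw [this]
  simp
end emp

section upper
variable {d n : ℕ} {l : ℝ → ℝ → ℝ} {Cl Cf : ℝ≥0} {f : (Fin d → ℝ) → ℝ}

lemma abs_sub_le_gradSupNorm (hf : ConvexOn ℝ Set.univ f) (hlip : LipschitzWith Cf f)
    (x y : Fin d → ℝ) : |f x - f y| ≤ gradSupNorm d f * ∑ i, |x i - y i| := by
  rw [abs_sub_le_iff]
  refine ⟨sub_le_gradSupNorm_mul hf hlip x y, ?_⟩
  have := sub_le_gradSupNorm_mul hf hlip y x
  simpa [abs_sub_comm] using this

lemma integrable_empirical {n : ℕ} {α : Type*} [MeasurableSpace α] [MeasurableSingletonClass α]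
    (hn : 0 < n) (P : Fin n → α) {h : α → ℝ} (hm : StronglyMeasurable h) :
    Integrable h ((n : ℝ≥0∞)⁻¹ • ∑ i : Fin n, Measure.dirac (P i)) := by
  refine Integrable.smul_measure ?_ ?_
  · exact integrable_finset_sum_measure.2 fun i _ => integrable_dirac_of_sm hm (P i)
  · exact ENNReal.inv_ne_top.2 (Nat.cast_ne_zero.2 hn.ne')

theorem upper_bound (hn : 0 < n)
    (hlconv : ConvexOn ℝ Set.univ (fun p : ℝ × ℝ => l p.1 p.2))
    (hllip : LipschitzWith Cl (fun p : ℝ × ℝ => l p.1 p.2))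
    (hfconv : ConvexOn ℝ Set.univ f) (hflip : LipschitzWith Cf f)
    (X : Fin n → Fin d → ℝ) (Y : Fin n → ℝ) {δ : ℝ} (hδ : 0 ≤ δ)
    {P : Measure ((Fin d → ℝ) × ℝ)} (hPprob : IsProbabilityMeasure P)
    (hP : transportCost d P ((n : ℝ≥0∞)⁻¹ • ∑ i : Fin n, Measure.dirac (X i, Y i)) ≤
      ENNReal.ofReal δ) :
    ∫ q, l q.2 (f q.1) ∂P ≤
      δ * lossGradBound l * gradSupNorm d f + (1 / n) * ∑ i, l (Y i) (f (X i)) := by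
  set L := lossGradBound l with hLdef
  set G := gradSupNorm d f with hGdef
  have hL0 : 0 ≤ L := lossGradBound_nonneg hlconv hllip
  have hG0 : 0 ≤ G := gradSupNorm_nonneg hfconv hflip
  set avg : ℝ := (1 / n) * ∑ i, l (Y i) (f (X i)) with havg
  -- continuity facts
  have hlcont : Continuous (fun p : ℝ × ℝ => l p.1 p.2) := hllip.continuous
  have hfcont : Continuous f := hflip.continuous
  have hIcont : Continuous (fun q : (Fin d → ℝ) × ℝ => l q.2 (f q.1)) := by
    have : (fun q : (Fin d → ℝ) × ℝ => l q.2 (f q.1)) =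
        (fun p : ℝ × ℝ => l p.1 p.2) ∘ (fun q => (q.2, f q.1)) := rfl
    rw [this]
    exact hlcont.comp (continuous_snd.prodMk (hfcont.comp continuous_fst))
  -- main estimate with slack ε
  have key : ∀ ε : ℝ, 0 < ε → ∫ q, l q.2 (f q.1) ∂P ≤ (δ + ε) * L * G + avg := by
    intro ε hε
    have hlt : transportCost d P ((n : ℝ≥0∞)⁻¹ • ∑ i : Fin n, Measure.dirac (X i, Y i)) <
        ENNReal.ofReal (δ + ε) :=
      lt_of_le_of_lt hP ((ENNReal.ofReal_lt_ofReal_iff (by linarith)).2 (by linarith))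
    rw [transportCost] at hlt
    rw [iInf_lt_iff] at hlt
    obtain ⟨π, hlt⟩ := hlt
    rw [iInf_lt_iff] at hlt
    obtain ⟨hfst, hlt⟩ := hlt
    rw [iInf_lt_iff] at hlt
    obtain ⟨hsnd, hcost⟩ := hlt
    -- c₁
    set c₁ : ((Fin d → ℝ) × ℝ) × ((Fin d → ℝ) × ℝ) → ℝ :=
      fun p => ∑ i, |p.1.1 i - p.2.1 i| with hc₁
    have hc₁cont : Continuous c₁ := by
      refine continuous_finset_sum _ fun i _ => ?_
      exact (((continuous_apply i).comp (continuous_fst.comp continuous_fst)).sub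
        ((continuous_apply i).comp (continuous_fst.comp continuous_snd))).abs
    have hc₁nn : ∀ p, 0 ≤ c₁ p := fun p => Finset.sum_nonneg fun i _ => abs_nonneg _
    have hgc : ∀ p, ENNReal.ofReal (c₁ p) ≤ groundCost d p.1 p.2 := by
      intro p
      unfold groundCost
      split
      · exact le_refl _
      · exact le_top
    have hlintc₁ : ∫⁻ p, ENNReal.ofReal (c₁ p) ∂π < ENNReal.ofReal (δ + ε) :=
      lt_of_le_of_lt (lintegral_mono hgc) hcost
    have hintc₁ : Integrable c₁ π := by
      refine ⟨hc₁cont.aestronglyMeasurable, ?_⟩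
      rw [HasFiniteIntegral]
      have : ∀ p, (‖c₁ p‖ₑ : ℝ≥0∞) = ENNReal.ofReal (c₁ p) := by
        intro p
        rw [← ofReal_norm, Real.norm_eq_abs, abs_of_nonneg (hc₁nn p)]
      simp_rw [this]
      exact hlintc₁.trans_le le_top
    have hintval : ∫ p, c₁ p ∂π ≤ δ + ε := by
      have h1 : ENNReal.ofReal (∫ p, c₁ p ∂π) = ∫⁻ p, ENNReal.ofReal (c₁ p) ∂π :=
        ofReal_integral_eq_lintegral_ofReal hintc₁ (Filter.Eventually.of_forall hc₁nn)
      have h2 : ENNReal.ofReal (∫ p, c₁ p ∂π) ≤ ENNReal.ofReal (δ + ε) :=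
        h1.le.trans hlintc₁.le
      exact (ENNReal.ofReal_le_ofReal_iff (by linarith)).1 h2
    -- a.e. y = y'
    have hAmeas : MeasurableSet {p : ((Fin d → ℝ) × ℝ) × ((Fin d → ℝ) × ℝ) | p.1.2 = p.2.2} :=
      (isClosed_eq (continuous_snd.comp continuous_fst)
        (continuous_snd.comp continuous_snd)).measurableSet
    have hae : ∀ᵐ p ∂π, p.1.2 = p.2.2 := by
      rw [Filter.eventually_iff, mem_ae_iff]
      by_contra hne
      have htop : ∫⁻ p, groundCost d p.1 p.2 ∂π = ⊤ := by
        refine eq_top_iff.2 ?_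
        calc (⊤ : ℝ≥0∞) = ⊤ * π {p | p.1.2 = p.2.2}ᶜ := by
              rw [ENNReal.top_mul]
              intro h; exact hne (by simpa using h)
          _ = ∫⁻ p in {p | p.1.2 = p.2.2}ᶜ, ⊤ ∂π := by rw [setLIntegral_const, mul_comm]
          _ = ∫⁻ p in {p | p.1.2 = p.2.2}ᶜ, groundCost d p.1 p.2 ∂π := by
              refine (setLIntegral_congr_fun hAmeas.compl ?_).symm
              refine fun p hp => ?_
              unfold groundCost
              dsimp only
              rw [if_neg (by simpa using hp)]
          _ ≤ ∫⁻ p, groundCost d p.1 p.2 ∂π := setLIntegral_le_lintegral _ _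
      rw [htop] at hcost
      exact (not_top_lt hcost)
    -- h₂ integrable, and its integral is avg
    set h₂ : ((Fin d → ℝ) × ℝ) × ((Fin d → ℝ) × ℝ) → ℝ := fun p => l p.2.2 (f p.2.1) with hh₂
    have hh₂cont : Continuous h₂ := hIcont.comp continuous_snd
    have hπsnd : Integrable h₂ π := by
      have hint_emp : Integrable (fun q : (Fin d → ℝ) × ℝ => l q.2 (f q.1)) (π.map Prod.snd) := by
        rw [hsnd]
        exact integrable_empirical hn (fun i => (X i, Y i)) hIcont.stronglyMeasurable
      exact (integrable_map_measure (hIcont.stronglyMeasurable.aestronglyMeasurable)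
        measurable_snd.aemeasurable).1 hint_emp
    have hinth₂ : ∫ p, h₂ p ∂π = avg := by
      have h1 : ∫ q, l q.2 (f q.1) ∂(π.map Prod.snd) = ∫ p, h₂ p ∂π :=
        integral_map measurable_snd.aemeasurable
          (hIcont.stronglyMeasurable.aestronglyMeasurable)
      rw [hsnd] at h1
      rw [← h1, havg, integral_empirical hn (fun i => (X i, Y i)) hIcont.stronglyMeasurable]
    -- difference bound
    set h₁ : ((Fin d → ℝ) × ℝ) × ((Fin d → ℝ) × ℝ) → ℝ := fun p => l p.1.2 (f p.1.1) with hh₁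
    have hh₁cont : Continuous h₁ := hIcont.comp continuous_fst
    have hdiffbd : ∀ᵐ p ∂π, ‖h₁ p - h₂ p‖ ≤ L * G * c₁ p := by
      filter_upwards [hae] with p hp
      rw [Real.norm_eq_abs, hh₁, hh₂]
      simp only
      rw [hp]
      calc |l p.2.2 (f p.1.1) - l p.2.2 (f p.2.1)| ≤ L * |f p.1.1 - f p.2.1| :=
            loss_lip_snd' hlconv hllip _ _ _
        _ ≤ L * (G * c₁ p) := by
            refine mul_le_mul_of_nonneg_left ?_ hL0
            exact abs_sub_le_gradSupNorm hfconv hflip _ _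
        _ = L * G * c₁ p := by ring
    have hintLGc : Integrable (fun p => L * G * c₁ p) π := (hintc₁.const_mul (L * G))
    have hπdiff : Integrable (fun p => h₁ p - h₂ p) π := by
      refine Integrable.mono' hintLGc ((hh₁cont.sub hh₂cont).aestronglyMeasurable) hdiffbd
    have hπh₁ : Integrable h₁ π := by
      have : h₁ = fun p => (h₁ p - h₂ p) + h₂ p := by funext p; ring
      rw [this]
      exact hπdiff.add hπsnd
    have hinth₁P : ∫ q, l q.2 (f q.1) ∂P = ∫ p, h₁ p ∂π := by
      have h1 : ∫ q, l q.2 (f q.1) ∂(π.map Prod.fst) = ∫ p, h₁ p ∂π :=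
        integral_map measurable_fst.aemeasurable
          (hIcont.stronglyMeasurable.aestronglyMeasurable)
      rw [hfst] at h1
      exact h1
    rw [hinth₁P]
    have hstep : ∫ p, h₁ p ∂π ≤ ∫ p, h₂ p ∂π + L * G * ∫ p, c₁ p ∂π := by
      have h3 : ∫ p, (h₁ p - h₂ p) ∂π ≤ ∫ p, L * G * c₁ p ∂π := by
        refine integral_mono_ae hπdiff hintLGc ?_
        filter_upwards [hdiffbd] with p hp
        exact (le_abs_self _).trans (by rw [← Real.norm_eq_abs]; exact hp)
      have h4 : ∫ p, (h₁ p - h₂ p) ∂π = ∫ p, h₁ p ∂π - ∫ p, h₂ p ∂π :=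
        integral_sub hπh₁ hπsnd
      have h5 : ∫ p, L * G * c₁ p ∂π = L * G * ∫ p, c₁ p ∂π := integral_const_mul _ _
      linarith
    refine hstep.trans ?_
    rw [hinth₂]
    have h6 : L * G * ∫ p, c₁ p ∂π ≤ L * G * (δ + ε) :=
      mul_le_mul_of_nonneg_left hintval (by positivity)
    linarith
  -- take ε → 0
  rcases eq_or_lt_of_le (mul_nonneg hL0 hG0) with hLG | hLG
  · have h1 := key 1 one_pos
    calc ∫ q, l q.2 (f q.1) ∂P ≤ (δ + 1) * L * G + avg := h1
      _ = δ * L * G + avg := by nlinarith [hLG.symm]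
  · refine le_of_forall_pos_le_add fun ε' hε' => ?_
    have h1 := key (ε' / (L * G)) (div_pos hε' hLG)
    calc ∫ q, l q.2 (f q.1) ∂P ≤ (δ + ε' / (L * G)) * L * G + avg := h1
      _ = δ * L * G + avg + ε' := by linear_combination div_mul_cancel₀ ε' hLG.ne'
    
end upper

lemma measure_map_finset_sum {α β ι : Type*} [MeasurableSpace α] [MeasurableSpace β]
    (s : Finset ι) (μ : ι → Measure α) {g : α → β} (hg : Measurable g) :
    (∑ i ∈ s, μ i).map g = ∑ i ∈ s, (μ i).map g := by
  classical
  induction s using Finset.induction_on with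
  | empty => simp [Measure.map_zero]
  | insert _ _ hnotmem ih =>
      rw [Finset.sum_insert hnotmem, Finset.sum_insert hnotmem, Measure.map_add _ _ hg, ih]

section construct
variable {d n : ℕ}

theorem construct_measure (hn : 0 < n) (X : Fin n → Fin d → ℝ) (Y : Fin n → ℝ)
    (i₀ : Fin n) (x' : Fin d → ℝ) {mR δ : ℝ} (hm0 : 0 ≤ mR) (hm1 : mR ≤ 1)
    (hδ : 0 ≤ δ) (hcost : mR * (∑ i, |x' i - X i₀ i|) ≤ δ * n)
    {h : ((Fin d → ℝ) × ℝ) → ℝ} (hm : StronglyMeasurable h) :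
    ∃ P : Measure ((Fin d → ℝ) × ℝ), IsProbabilityMeasure P ∧
      transportCost d P ((n : ℝ≥0∞)⁻¹ • ∑ i : Fin n, Measure.dirac (X i, Y i)) ≤
        ENNReal.ofReal δ ∧
      ∫ q, h q ∂P = (1 / n) * ∑ i, h (X i, Y i) +
        (mR / n) * (h (x', Y i₀) - h (X i₀, Y i₀)) := by
  classical
  set p₀ : (Fin d → ℝ) × ℝ := (X i₀, Y i₀) with hp₀
  set p' : (Fin d → ℝ) × ℝ := (x', Y i₀) with hp'
  set m : ℝ≥0∞ := ENNReal.ofReal mR with hmdef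
  have hm1' : m ≤ 1 := by
    rw [hmdef, ← ENNReal.ofReal_one]
    exact ENNReal.ofReal_le_ofReal hm1
  have hmne : m ≠ ⊤ := ENNReal.ofReal_ne_top
  have h1mne : (1 : ℝ≥0∞) - m ≠ ⊤ := by
    exact ne_top_of_le_ne_top ENNReal.one_ne_top tsub_le_self
  have hnne : (n : ℝ≥0∞) ≠ 0 := Nat.cast_ne_zero.2 hn.ne'
  have hntop : (n : ℝ≥0∞) ≠ ⊤ := ENNReal.natCast_ne_top n
  set μtot : Measure ((Fin d → ℝ) × ℝ) :=
    (1 - m) • Measure.dirac p₀ + m • Measure.dirac p' +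
      ∑ i ∈ Finset.univ.erase i₀, Measure.dirac (X i, Y i) with hμtot
  set P : Measure ((Fin d → ℝ) × ℝ) := (n : ℝ≥0∞)⁻¹ • μtot with hP
  set π : Measure (((Fin d → ℝ) × ℝ) × ((Fin d → ℝ) × ℝ)) :=
    (n : ℝ≥0∞)⁻¹ • ((1 - m) • Measure.dirac (p₀, p₀) + m • Measure.dirac (p', p₀) +
      ∑ i ∈ Finset.univ.erase i₀, Measure.dirac ((X i, Y i), (X i, Y i))) with hπ
  have hμtot_univ : μtot Set.univ = n := by
    rw [hμtot]
    simp only [Measure.coe_add, Measure.coe_smul, Pi.add_apply, Pi.smul_apply,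
      Measure.coe_finset_sum, Finset.sum_apply, Measure.dirac_apply_of_mem (Set.mem_univ _),
      smul_eq_mul, mul_one]
    rw [tsub_add_cancel_of_le hm1']
    simp only [Finset.sum_const, nsmul_eq_mul, mul_one]
    rw [Finset.card_erase_of_mem (Finset.mem_univ i₀), Finset.card_univ, Fintype.card_fin]
    rw [← Nat.cast_one (R := ℝ≥0∞), ← Nat.cast_add]
    congr 1
    omega
  have hPprob : IsProbabilityMeasure P := by
    constructor
    rw [hP, Measure.smul_apply, hμtot_univ, smul_eq_mul, ENNReal.inv_mul_cancel hnne hntop]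
  -- marginals
  have hfst : π.map Prod.fst = P := by
    rw [hπ, Measure.map_smul, Measure.map_add _ _ measurable_fst,
      Measure.map_add _ _ measurable_fst, Measure.map_smul, Measure.map_smul,
      Measure.map_dirac' measurable_fst, Measure.map_dirac' measurable_fst,
      measure_map_finset_sum _ _ measurable_fst]
    simp only [Measure.map_dirac' measurable_fst]
    rfl
  have hsnd : π.map Prod.snd = (n : ℝ≥0∞)⁻¹ • ∑ i : Fin n, Measure.dirac (X i, Y i) := by
    rw [hπ, Measure.map_smul, Measure.map_add _ _ measurable_snd,
      Measure.map_add _ _ measurable_snd, Measure.map_smul, Measure.map_smul,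
      Measure.map_dirac' measurable_snd, Measure.map_dirac' measurable_snd,
      measure_map_finset_sum _ _ measurable_snd]
    simp only [Measure.map_dirac' measurable_snd]
    congr 1
    have hcollapse : (1 - m) • Measure.dirac (p₀, p₀).2 + m • Measure.dirac (p', p₀).2 =
        Measure.dirac p₀ := by
      simp only
      rw [← add_smul, tsub_add_cancel_of_le hm1', one_smul]
    rw [hcollapse]
    rw [show (Measure.dirac p₀ : Measure ((Fin d → ℝ) × ℝ)) = Measure.dirac (X i₀, Y i₀) from rfl]
    exact Finset.add_sum_erase Finset.univ
      (fun i => (Measure.dirac (X i, Y i) : Measure ((Fin d → ℝ) × ℝ)))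
      (Finset.mem_univ i₀)
  -- cost
  have hcost' : transportCost d P ((n : ℝ≥0∞)⁻¹ • ∑ i : Fin n, Measure.dirac (X i, Y i)) ≤
      ENNReal.ofReal δ := by
    rw [transportCost]
    refine iInf_le_of_le π ?_
    rw [iInf_pos hfst, iInf_pos hsnd]
    have hself : ∀ q : (Fin d → ℝ) × ℝ, groundCost d q q = 0 := by
      intro q; unfold groundCost; simp
    have hval : ∫⁻ p, groundCost d p.1 p.2 ∂π =
        (n : ℝ≥0∞)⁻¹ * (m * groundCost d p' p₀) := by
      rw [hπ, lintegral_smul_measure, lintegral_add_measure, lintegral_add_measure,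
        lintegral_smul_measure, lintegral_smul_measure, lintegral_dirac, lintegral_dirac,
        lintegral_finset_sum_measure]
      simp only [lintegral_dirac]
      simp only [hself, mul_zero, zero_add, Finset.sum_const_zero, add_zero]
      simp only [smul_zero, zero_add, smul_eq_mul, mul_zero]
    rw [hval]
    have hgc : groundCost d p' p₀ = ENNReal.ofReal (∑ i, |x' i - X i₀ i|) := by
      unfold groundCost
      rw [if_pos rfl]
    rw [hgc, hmdef, ← ENNReal.ofReal_mul hm0]
    calc (n : ℝ≥0∞)⁻¹ * ENNReal.ofReal (mR * ∑ i, |x' i - X i₀ i|)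
        ≤ (n : ℝ≥0∞)⁻¹ * ENNReal.ofReal (δ * n) := by
          exact mul_le_mul_right (ENNReal.ofReal_le_ofReal hcost) _
      _ = ENNReal.ofReal δ := by
          rw [ENNReal.ofReal_mul hδ, ENNReal.ofReal_natCast]
          rw [mul_comm ((n : ℝ≥0∞)⁻¹) _, mul_assoc, mul_comm (n : ℝ≥0∞) _]
          rw [ENNReal.inv_mul_cancel hnne hntop, mul_one]
  refine ⟨P, hPprob, hcost', ?_⟩
  have hint1 : Integrable h ((1 - m) • Measure.dirac p₀ + m • Measure.dirac p') :=
    ((integrable_dirac_of_sm hm p₀).smul_measure h1mne).add_measure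
      ((integrable_dirac_of_sm hm p').smul_measure hmne)
  have hint2 : Integrable h (∑ i ∈ Finset.univ.erase i₀, Measure.dirac ((X i, Y i) : (Fin d → ℝ) × ℝ)) :=
    integrable_finset_sum_measure.2 fun i _ => integrable_dirac_of_sm hm _
  have hPe : ∫ q, h q ∂P = ((n : ℝ≥0∞)⁻¹).toReal * ∫ q, h q ∂μtot := by
    rw [hP, integral_smul_measure, smul_eq_mul]
  rw [hPe, hμtot, integral_add_measure hint1 hint2,
    integral_add_measure ((integrable_dirac_of_sm hm p₀).smul_measure h1mne)
      ((integrable_dirac_of_sm hm p').smul_measure hmne),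
    integral_smul_measure, integral_smul_measure,
    integral_finset_sum_measure (fun i _ => integrable_dirac_of_sm hm _)]
  simp only [integral_dirac' h _ hm]
  have hm_toReal : m.toReal = mR := by rw [hmdef, ENNReal.toReal_ofReal hm0]
  have h1m_toReal : (1 - m).toReal = 1 - mR := by
    rw [ENNReal.toReal_sub_of_le hm1' ENNReal.one_ne_top, ENNReal.toReal_one, hm_toReal]
  have hsum_erase : ∑ i ∈ Finset.univ.erase i₀, h (X i, Y i) =
      (∑ i, h (X i, Y i)) - h (X i₀, Y i₀) := by
    have := Finset.add_sum_erase Finset.univ (fun i => h (X i, Y i)) (Finset.mem_univ i₀)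
    linarith
  have hninv : ((n : ℝ≥0∞)⁻¹).toReal = 1 / n := by
    rw [ENNReal.toReal_inv]
    simp
  rw [hm_toReal, h1m_toReal, hsum_erase, hninv, smul_eq_mul, smul_eq_mul]
  show (1 / n : ℝ) * ((1 - mR) * h p₀ + mR * h p' + ((∑ i, h (X i, Y i)) - h (X i₀, Y i₀))) = _
  rw [hp₀, hp']
  ring

section lower
variable {d n : ℕ} {l : ℝ → ℝ → ℝ} {Cl Cf : ℝ≥0} {f : (Fin d → ℝ) → ℝ}

set_option maxHeartbeats 2000000 in
theorem lower_bound (hn : 0 < n)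
    (hlconv : ConvexOn ℝ Set.univ (fun p : ℝ × ℝ => l p.1 p.2))
    (hllip : LipschitzWith Cl (fun p : ℝ × ℝ => l p.1 p.2))
    (hlsym : ∀ y z : ℝ, l y z = l (-y) (-z))
    (hfconv : ConvexOn ℝ Set.univ f) (hflip : LipschitzWith Cf f)
    (X : Fin n → Fin d → ℝ) (Y : Fin n → ℝ) {δ : ℝ} (hδ : 0 ≤ δ)
    {η : ℝ} (hη : 0 < η) :
    ∃ P : Measure ((Fin d → ℝ) × ℝ), IsProbabilityMeasure P ∧
      transportCost d P ((n : ℝ≥0∞)⁻¹ • ∑ i : Fin n, Measure.dirac (X i, Y i)) ≤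
        ENNReal.ofReal δ ∧
      δ * lossGradBound l * gradSupNorm d f + (1 / n) * ∑ i, l (Y i) (f (X i)) - η ≤
        ∫ q, l q.2 (f q.1) ∂P := by
  classical
  set L := lossGradBound l with hLdef
  set G := gradSupNorm d f with hGdef
  have hL0 : 0 ≤ L := lossGradBound_nonneg hlconv hllip
  have hG0 : 0 ≤ G := gradSupNorm_nonneg hfconv hflip
  set avg : ℝ := (1 / n) * ∑ i, l (Y i) (f (X i)) with havg
  have hIcont : Continuous (fun q : (Fin d → ℝ) × ℝ => l q.2 (f q.1)) := by
    have : (fun q : (Fin d → ℝ) × ℝ => l q.2 (f q.1)) =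
        (fun p : ℝ × ℝ => l p.1 p.2) ∘ (fun q => (q.2, f q.1)) := rfl
    rw [this]
    exact hllip.continuous.comp (continuous_snd.prodMk (hflip.continuous.comp continuous_fst))
  have hm : StronglyMeasurable (fun q : (Fin d → ℝ) × ℝ => l q.2 (f q.1)) :=
    hIcont.stronglyMeasurable
  set i₀ : Fin n := ⟨0, hn⟩ with hi₀
  set h : ((Fin d → ℝ) × ℝ) → ℝ := fun q => l q.2 (f q.1) with hh
  have hnR : (0 : ℝ) < n := Nat.cast_pos.2 hn
  rcases le_or_gt (δ * L * G) 0 with hzero | hpos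
  · -- trivial case : empirical measure itself
    obtain ⟨P, hP1, hP2, hP3⟩ := construct_measure hn X Y i₀ (X i₀) le_rfl zero_le_one hδ
      (by simpa using mul_nonneg hδ hnR.le) hm
    refine ⟨P, hP1, hP2, ?_⟩
    rw [hP3]
    clear hP1 hP2 hP3
    have hLG0 : δ * L * G = 0 := le_antisymm hzero (by positivity)
    have hhval : ∀ i, h (X i, Y i) = l (Y i) (f (X i)) := fun i => rfl
    simp only [hhval, hLG0, sub_self, mul_zero, zero_mul, zero_div, add_zero, zero_add]
    linarith only [havg.le, havg.ge, hη]
  · -- main case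
    have hδpos : 0 < δ := by
      rcases hδ.lt_or_eq with h' | h'
      · exact h'
      · exfalso; rw [← h'] at hpos; simp at hpos
    have hLpos : 0 < L := by
      rcases hL0.lt_or_eq with h' | h'
      · exact h'
      · exfalso; rw [← h'] at hpos; simp at hpos
    have hGpos : 0 < G := by
      rcases hG0.lt_or_eq with h' | h'
      · exact h'
      · exfalso; rw [← h'] at hpos; simp at hpos
    set ε₁ : ℝ := min (L / 2) (min (G / 2) (η / (2 * δ * (L + G + 1)))) with hε₁def
    have hε₁pos : 0 < ε₁ := by
      refine lt_min (by linarith) (lt_min (by linarith) (by positivity))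
    have hε₁L : ε₁ ≤ L / 2 := min_le_left _ _
    have hε₁G : ε₁ ≤ G / 2 := (min_le_right _ _).trans (min_le_left _ _)
    have hε₁e : ε₁ ≤ η / (2 * δ * (L + G + 1)) := (min_le_right _ _).trans (min_le_right _ _)
    clear_value ε₁
    have claim1 : δ * L * G - η / 2 ≤ δ * (L - ε₁) * (G - ε₁) := by
      have key0 : δ * (L + G) * (η / (2 * δ * (L + G + 1))) ≤ η / 2 := by
        rw [← mul_div_assoc]
        rw [div_le_div_iff₀ (by positivity) two_pos]
        linarith only [mul_pos hδpos hη]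
      have key1 : δ * ε₁ * (L + G) ≤ η / 2 := by
        have h14 : δ * ε₁ * (L + G) ≤ δ * (η / (2 * δ * (L + G + 1))) * (L + G) := by
          have h15 := mul_le_mul_of_nonneg_right
            (mul_le_mul_of_nonneg_left hε₁e hδpos.le)
            (by linarith : (0:ℝ) ≤ L + G)
          linarith only [h15]
        refine h14.trans ?_
        calc δ * (η / (2 * δ * (L + G + 1))) * (L + G)
            = δ * (L + G) * (η / (2 * δ * (L + G + 1))) := by ring
          _ ≤ η / 2 := key0
      linarith only [key1, mul_nonneg hδpos.le (sq_nonneg ε₁)]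
    -- subgradient of f with near-maximal norm
    obtain ⟨cv, hcv, hcvgt⟩ := exists_lt_of_lt_csSup (gradSet_nonempty hfconv hflip)
      (show G - ε₁ < G by linarith)
    obtain ⟨xstar, g, hg, rfl⟩ := hcv
    have hgnorm : G - ε₁ < ‖g‖ := hcvgt
    have hgnormpos : 0 < ‖g‖ := by linarith
    have hdpos : ∃ j : Fin d, True := by
      by_contra hempty
      push_neg at hempty
      have hgz : g = 0 := funext fun j => (hempty j).elim
      rw [hgz, norm_zero] at hgnormpos
      exact lt_irrefl _ hgnormpos
    have hFnonempty : (Finset.univ : Finset (Fin d)).Nonempty := by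
      obtain ⟨j, _⟩ := hdpos
      exact ⟨j, Finset.mem_univ j⟩
    obtain ⟨j, _, hjmax⟩ := Finset.exists_max_image Finset.univ (fun i => |g i|) hFnonempty
    set a : ℝ := |g j| with hadef
    have hga : ‖g‖ ≤ a := by
      rw [pi_norm_le_iff_of_nonneg (abs_nonneg _)]
      intro i
      exact hjmax i (Finset.mem_univ i)
    have hapos : 0 < a := lt_of_lt_of_le hgnormpos hga
    have haG : G - ε₁ < a := lt_of_lt_of_le hgnorm hga
    set s : ℝ := if 0 ≤ g j then (1 : ℝ) else -1 with hsdef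
    have hgs : g j * s = a := by
      rw [hsdef, hadef]
      split
      · rw [mul_one, abs_of_nonneg (by assumption)]
      · rw [mul_neg_one, abs_of_neg (by linarith [not_le.1 (by assumption)])]
    have hs1 : |s| = 1 := by
      rw [hsdef]; split <;> simp
    clear_value a s
    have hf_dir : ∀ t : ℝ, f xstar + a * t ≤ f (xstar + Pi.single j (s * t)) := by
      intro t
      have hgy := hg (xstar + (Pi.single j (s * t) : Fin d → ℝ))
      have hsum : ∑ i, g i * ((xstar + (Pi.single j (s * t) : Fin d → ℝ)) i - xstar i)
          = a * t := by
        have hterm : ∀ i, (xstar + (Pi.single j (s * t) : Fin d → ℝ)) i - xstar i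
            = (Pi.single j (s * t) : Fin d → ℝ) i := by intro i; simp
        simp_rw [hterm]
        rw [Finset.sum_eq_single j]
        · rw [Pi.single_eq_same, ← mul_assoc, hgs]
        · intro b _ hb; rw [Pi.single_eq_of_ne hb, mul_zero]
        · intro hb; exact absurd (Finset.mem_univ j) hb
      rw [hsum] at hgy
      exact hgy
    -- recession slope
    obtain ⟨z₂, K, g₂, hg₂gt, hK0, hrec⟩ := exists_recession_slope hlconv hllip hlsym (Y i₀) hε₁pos
    have hg₂pos : 0 < g₂ := by linarith
    -- constants
    set A : ℝ := ∑ i, |xstar i - X i₀ i| with hAdef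
    have hA0 : 0 ≤ A := Finset.sum_nonneg fun i _ => abs_nonneg _
    clear_value A
    set B : ℝ := l (Y i₀) z₂ + g₂ * (f xstar - z₂) - K - l (Y i₀) (f (X i₀)) with hBdef
    clear_value B
    set c : ℝ := η / (2 * δ) with hcdef
    have hcpos : 0 < c := by positivity
    have hδc : δ * c = η / 2 := by
      rw [hcdef]; field_simp
    clear_value c
    set T : ℝ := max (max (A + δ * n + 1) ((g₂ * a * A - B - c * A) / c + 1))
      (max ((-B) / (g₂ * a) + 1) 1) with hTdef
    have hT1 : A + δ * n + 1 ≤ T := le_max_of_le_left (le_max_left _ _)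
    have hT2 : (g₂ * a * A - B - c * A) / c + 1 ≤ T := le_max_of_le_left (le_max_right _ _)
    have hT3 : (-B) / (g₂ * a) + 1 ≤ T := le_max_of_le_right (le_max_left _ _)
    have hT4 : (1:ℝ) ≤ T := le_max_of_le_right (le_max_right _ _)
    have hTpos : 0 < T := lt_of_lt_of_le one_pos hT4
    clear_value T
    set y' : Fin d → ℝ := xstar + Pi.single j (s * T) with hy'def
    set R : ℝ := ∑ i, |y' i - X i₀ i| with hRdef
    have hsT : |s * T| = T := by
      rw [abs_mul, hs1, one_mul, abs_of_pos hTpos]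
    have hsingle_sum : ∑ i, |(Pi.single j (s * T) : Fin d → ℝ) i| = T := by
      rw [Finset.sum_eq_single j]
      · rw [Pi.single_eq_same, hsT]
      · intro b _ hb; rw [Pi.single_eq_of_ne hb, abs_zero]
      · intro hb; exact absurd (Finset.mem_univ j) hb
    have hRub : R ≤ A + T := by
      have hterm : ∀ i, |y' i - X i₀ i| ≤ |xstar i - X i₀ i| +
          |(Pi.single j (s * T) : Fin d → ℝ) i| := by
        intro i
        have hx : y' i - X i₀ i = (xstar i - X i₀ i) + (Pi.single j (s * T) : Fin d → ℝ) i := by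
          rw [hy'def, Pi.add_apply]; ring
        rw [hx]; exact abs_add_le _ _
      calc R ≤ ∑ i, (|xstar i - X i₀ i| + |(Pi.single j (s * T) : Fin d → ℝ) i|) :=
            Finset.sum_le_sum fun i _ => hterm i
        _ = A + T := by rw [Finset.sum_add_distrib, hsingle_sum, hAdef]
    have hRlb : T - A ≤ R := by
      have h1 : |y' j - X i₀ j| ≤ R := by
        rw [hRdef]
        exact Finset.single_le_sum (f := fun i => |y' i - X i₀ i|)
          (fun i _ => abs_nonneg _) (Finset.mem_univ j)
      have h2 : |xstar j - X i₀ j| ≤ A := by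
        rw [hAdef]
        exact Finset.single_le_sum (f := fun i => |xstar i - X i₀ i|)
          (fun i _ => abs_nonneg _) (Finset.mem_univ j)
      have h3 : y' j - X i₀ j = (s * T) + (xstar j - X i₀ j) := by
        rw [hy'def, Pi.add_apply, Pi.single_eq_same]; ring
      have h4 : T - |xstar j - X i₀ j| ≤ |y' j - X i₀ j| := by
        rw [h3]
        calc T - |xstar j - X i₀ j| = |s * T| - |xstar j - X i₀ j| := by rw [hsT]
          _ ≤ |s * T + (xstar j - X i₀ j)| := by
              have h5 := abs_add_le (s * T + (xstar j - X i₀ j)) (-(xstar j - X i₀ j))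
              simp only [add_neg_cancel_right, abs_neg] at h5
              linarith
      linarith
    clear_value R
    have hRpos : 0 < R := by linarith [hRlb, hT1, mul_nonneg hδ hnR.le]
    set mR : ℝ := δ * n / R with hmRdef
    have hm0 : 0 ≤ mR := by positivity
    have hm1 : mR ≤ 1 := by
      rw [hmRdef, div_le_one hRpos]
      linarith [hRlb, hT1]
    have hcosteq : mR * R = δ * n := by rw [hmRdef]; exact div_mul_cancel₀ _ hRpos.ne'
    clear_value mR
    set num : ℝ := l (Y i₀) (f y') - l (Y i₀) (f (X i₀)) with hnumdef
    have hrecy : l (Y i₀) z₂ + g₂ * (f y' - z₂) - K ≤ l (Y i₀) (f y') := by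
      have := hrec (f y' - z₂)
      rw [show z₂ + (f y' - z₂) = f y' by ring] at this
      exact this
    have hfy' : f xstar + a * T ≤ f y' := by rw [hy'def]; exact hf_dir T
    clear_value y'
    have hnum1 : B + g₂ * (a * T) ≤ num := by
      rw [hnumdef, hBdef]
      have h5 : g₂ * (f xstar + a * T - z₂) ≤ g₂ * (f y' - z₂) :=
        mul_le_mul_of_nonneg_left (by linarith only [hfy']) hg₂pos.le
      linarith only [hrecy, h5]
    clear_value num
    have hnum_lb : (g₂ * a - c) * (A + T) ≤ num := by
      have h6 : g₂ * a * A - B - c * A ≤ c * T := by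
        have h7 : ((g₂ * a * A - B - c * A) / c) * c = g₂ * a * A - B - c * A :=
          div_mul_cancel₀ _ hcpos.ne'
        have h7b := mul_le_mul_of_nonneg_right hT2 hcpos.le
        linarith only [h7, h7b, hcpos]
      linarith only [hnum1, h6]
    have hnum_nonneg : 0 ≤ num := by
      have hg₂a : (0:ℝ) < g₂ * a := mul_pos hg₂pos hapos
      have h8 : (-B) / (g₂ * a) * (g₂ * a) = -B := div_mul_cancel₀ _ hg₂a.ne'
      have h9 := mul_le_mul_of_nonneg_right hT3 hg₂a.le
      linarith only [hnum1, h8, h9, hg₂a]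
    have hgain : δ * (g₂ * a - c) ≤ (mR / n) * num := by
      have he1 : (mR / n) * num = δ * (num / R) := by
        rw [hmRdef]
        field_simp
      rw [he1]
      have he2 : num / (A + T) ≤ num / R :=
        div_le_div_of_nonneg_left hnum_nonneg hRpos hRub
      have he3 : g₂ * a - c ≤ num / (A + T) := by
        rw [le_div_iff₀ (by linarith only [hA0, hTpos] : (0:ℝ) < A + T)]
        linarith only [hnum_lb]
      have he4 : g₂ * a - c ≤ num / R := he3.trans he2
      exact mul_le_mul_of_nonneg_left he4 hδpos.le
    have hfinal : δ * L * G - η ≤ (mR / n) * num := by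
      have h10 : δ * (L - ε₁) * (G - ε₁) ≤ δ * (g₂ * a) := by
        have hLe : 0 ≤ L - ε₁ := by linarith
        have hGe : 0 ≤ G - ε₁ := by linarith
        have h13 : (L - ε₁) * (G - ε₁) ≤ g₂ * a := by
          calc (L - ε₁) * (G - ε₁) ≤ g₂ * (G - ε₁) :=
                mul_le_mul_of_nonneg_right (by linarith) hGe
            _ ≤ g₂ * a := mul_le_mul_of_nonneg_left (by linarith) hg₂pos.le
        calc δ * (L - ε₁) * (G - ε₁) = δ * ((L - ε₁) * (G - ε₁)) := by ring
          _ ≤ δ * (g₂ * a) := mul_le_mul_of_nonneg_left h13 hδpos.le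
      have h11 : δ * (g₂ * a) - η / 2 = δ * (g₂ * a - c) + (δ * c - η/2) := by ring
      have h12 : δ * (g₂ * a) - η / 2 ≤ (mR / n) * num := by
        rw [h11, hδc]
        simpa using hgain
      linarith only [claim1, h10, h12]
    obtain ⟨P, hP1, hP2, hP3⟩ := construct_measure hn X Y i₀ y' hm0 hm1 hδ
      (by rw [← hRdef]; exact le_of_eq hcosteq) hm
    refine ⟨P, hP1, hP2, ?_⟩
    rw [hP3]
    clear hP1 hP2 hP3 hm
    have hhval : ∀ i, h (X i, Y i) = l (Y i) (f (X i)) := fun i => rfl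
    have hhy' : h (y', Y i₀) = l (Y i₀) (f y') := rfl
    have hh0 : h (X i₀, Y i₀) = l (Y i₀) (f (X i₀)) := rfl
    simp only [hhval, hhy', hh0]
    rw [← hnumdef]
    linarith only [hfinal, havg.le, havg.ge]
end lower

/-- Strong duality for distributionally robust convex regression: for any `δ ≥ 0`,
`inf_f sup_{P : D(P,P_n) ≤ δ} E_P[l(Y, f(X))]`
`= inf_f { δ L ‖∇f‖_∞ + (1/n) Σ l(Y_i, f(X_i)) }`,
the infima running over convex Lipschitz `f : ℝ^d → ℝ`. -/
theorem stmt12 (d n : ℕ) (hn : 0 < n) (l : ℝ → ℝ → ℝ)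
    (hlconv : ConvexOn ℝ Set.univ (fun p : ℝ × ℝ => l p.1 p.2))
    (hllip : ∃ C : ℝ≥0, LipschitzWith C (fun p : ℝ × ℝ => l p.1 p.2))
    (hlsym : ∀ y z : ℝ, l y z = l (-y) (-z))
    (X : Fin n → Fin d → ℝ) (Y : Fin n → ℝ) (δ : ℝ) (hδ : 0 ≤ δ) :
    (⨅ f : {f : (Fin d → ℝ) → ℝ //
        ConvexOn ℝ Set.univ f ∧ ∃ C : ℝ≥0, LipschitzWith C f},
      ⨆ P : {P : Measure ((Fin d → ℝ) × ℝ) // IsProbabilityMeasure P ∧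
          transportCost d P
            ((n : ℝ≥0∞)⁻¹ • ∑ i : Fin n, Measure.dirac (X i, Y i)) ≤
            ENNReal.ofReal δ},
        ∫ q, l q.2 (f.1 q.1) ∂P.1) =
    ⨅ f : {f : (Fin d → ℝ) → ℝ //
        ConvexOn ℝ Set.univ f ∧ ∃ C : ℝ≥0, LipschitzWith C f},
      (δ * lossGradBound l * gradSupNorm d f.1 +
        (1 / n) * ∑ i : Fin n, l (Y i) (f.1 (X i))) := by
  obtain ⟨Cl, hllipC⟩ := hllip
  refine iInf_congr ?_
  intro f
  obtain ⟨hfconv, Cf, hflipC⟩ := f.2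
  haveI hPn : IsProbabilityMeasure
      ((n : ℝ≥0∞)⁻¹ • ∑ i : Fin n, Measure.dirac ((X i, Y i) : (Fin d → ℝ) × ℝ)) :=
    isProb_empirical hn (fun i => (X i, Y i))
  have hPnfeas : transportCost d
      ((n : ℝ≥0∞)⁻¹ • ∑ i : Fin n, Measure.dirac ((X i, Y i) : (Fin d → ℝ) × ℝ))
      ((n : ℝ≥0∞)⁻¹ • ∑ i : Fin n, Measure.dirac ((X i, Y i) : (Fin d → ℝ) × ℝ)) ≤
      ENNReal.ofReal δ := transportCost_self_le _ _
  haveI hne : Nonempty {P : Measure ((Fin d → ℝ) × ℝ) // IsProbabilityMeasure P ∧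
      transportCost d P
        ((n : ℝ≥0∞)⁻¹ • ∑ i : Fin n, Measure.dirac (X i, Y i)) ≤
        ENNReal.ofReal δ} := ⟨⟨_, hPn, hPnfeas⟩⟩
  have hub : ∀ P : {P : Measure ((Fin d → ℝ) × ℝ) // IsProbabilityMeasure P ∧
      transportCost d P
        ((n : ℝ≥0∞)⁻¹ • ∑ i : Fin n, Measure.dirac (X i, Y i)) ≤
        ENNReal.ofReal δ},
      ∫ q, l q.2 (f.1 q.1) ∂P.1 ≤
        δ * lossGradBound l * gradSupNorm d f.1 + (1 / n) * ∑ i, l (Y i) (f.1 (X i)) :=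
    fun P => upper_bound hn hlconv hllipC hfconv hflipC X Y hδ P.2.1 P.2.2
  have hbdd : BddAbove (Set.range (fun P : {P : Measure ((Fin d → ℝ) × ℝ) //
      IsProbabilityMeasure P ∧
      transportCost d P
        ((n : ℝ≥0∞)⁻¹ • ∑ i : Fin n, Measure.dirac (X i, Y i)) ≤
        ENNReal.ofReal δ} => ∫ q, l q.2 (f.1 q.1) ∂P.1)) := by
    refine ⟨δ * lossGradBound l * gradSupNorm d f.1 + (1 / n) * ∑ i, l (Y i) (f.1 (X i)), ?_⟩
    rintro v ⟨P, rfl⟩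
    exact hub P
  refine le_antisymm (ciSup_le hub) ?_
  refine le_of_forall_pos_le_add fun η hη => ?_
  obtain ⟨P, h1, h2, h3⟩ := lower_bound hn hlconv hllipC hlsym hfconv hflipC X Y hδ hη
  have hle := le_ciSup hbdd (⟨P, h1, h2⟩ : {P : Measure ((Fin d → ℝ) × ℝ) //
      IsProbabilityMeasure P ∧
      transportCost d P
        ((n : ℝ≥0∞)⁻¹ • ∑ i : Fin n, Measure.dirac (X i, Y i)) ≤
        ENNReal.ofReal δ})
  simp only at hle
  linarith only [h3, hle]
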